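/- arXiv:1602.01200 — 4 statements merged into one kernel-verified Lean document; each statement's English description precedes it below -/
import Mathlib

section
/- With d₁ = 1/2 + √7/10 − √2/10, d₂ = 1/2 − √7/10 − √2/10, ω₁ = 1/2 + √14/84, ω₂ = 1/2 − √14/84, the middle weight ω_M = √2/6 satisfies ω₁d₁⁴ + ω₂d₂⁴ + ω_M/2 = 1/5. -/
open Real

theorem middle_weight_quartic_c0 :
    let d1 : ℝ := 1/2 + Real.sqrt 7 / 10 - Real.sqrt 2 / 10
    let d2 : ℝ := 1/2 - Real.sqrt 7 / 10 - Real.sqrt 2 / 10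
    let ω1 : ℝ := 1/2 + Real.sqrt 14 / 84
    let ω2 : ℝ := 1/2 - Real.sqrt 14 / 84
    let ωM : ℝ := Real.sqrt 2 / 6
    ω1 * d1^4 + ω2 * d2^4 + ωM / 2 = 1/5 := by
  have h2 : Real.sqrt 2 ^ 2 = 2 := Real.sq_sqrt (by norm_num)
  have h7 : Real.sqrt 7 ^ 2 = 7 := Real.sq_sqrt (by norm_num)
  have h14 : Real.sqrt 14 = Real.sqrt 2 * Real.sqrt 7 := by
    rw [← Real.sqrt_mul (by norm_num)]; norm_num
  simp only
  rw [h14]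
  linear_combination
    ((19/1250 : ℝ) + (-1/500) * Real.sqrt 2 + (-1/7500) * Real.sqrt 7^2
      + (1/10000) * Real.sqrt 2^2 + (1/7000) * Real.sqrt 2 * Real.sqrt 7^2
      + (-1/105000) * Real.sqrt 7^4 + (-1/105000) * Real.sqrt 2^2 * Real.sqrt 7^2) * h2
    + ((153/10000 : ℝ) + (-11/2625) * Real.sqrt 2 + (17/210000) * Real.sqrt 7^2
      + (1/21000) * Real.sqrt 2 * Real.sqrt 7^2) * h7
end

section
/- The real number d₁ = 67/98 − 3√78/98 − √(95 − 10√78)/98 is a root of the quartic polynomial 52 − 364x + 905x² − 938x³ + 343x⁴. -/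
open Real

theorem d1_root_of_quartic :
    let d1 : ℝ := 67/98 - 3 * Real.sqrt 78 / 98 - Real.sqrt (95 - 10 * Real.sqrt 78) / 98
    52 - 364 * d1 + 905 * d1^2 - 938 * d1^3 + 343 * d1^4 = 0 := by
  intro d1
  set a := Real.sqrt 78 with ha'
  have ha : a ^ 2 = 78 := Real.sq_sqrt (by norm_num)
  have hapos : 0 ≤ a := Real.sqrt_nonneg _
  have hnn : (0:ℝ) ≤ 95 - 10 * a := by nlinarith [ha, hapos]
  set b := Real.sqrt (95 - 10 * a) with hb'
  have hb : b ^ 2 = 95 - 10 * a := Real.sq_sqrt hnn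
  show 52 - 364 * (67/98 - 3 * a / 98 - b / 98) + 905 * (67/98 - 3 * a / 98 - b / 98)^2
    - 938 * (67/98 - 3 * a / 98 - b / 98)^3 + 343 * (67/98 - 3 * a / 98 - b / 98)^4 = 0
  linear_combination (-1399/134456 + 81/268912 * a^2 + 27/67228 * a * b - 135/67228 * a - 15/33614 * b) * ha
    + (-1499/268912 + 27/134456 * a^2 + 3/67228 * a * b + 1/268912 * b^2 - 5/134456 * a) * hb
end

section
/- For the degree-6 C¹ asymptotic rule, the total weight per two-element block equals the block length: 2ω₁ + 2ω₂ + ω₃ = 2, and each weight is positive: ω₁ > 0, ω₂ > 0, ω₃ > 0, where ω₁ = 1693/4160 + 3√65/4160 − 673√30/99840 + 2047√78/299520, ω₂ = 1693/4160 + 3√65/4160 + 673√30/99840 − 2047√78/299520, ω₃ = 387/1040 − 3√65/1040. -/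
open Real

theorem sixtic_weights_sum_and_positive :
    let ω1 : ℝ := 1693/4160 + 3 * Real.sqrt 65 / 4160 - 673 * Real.sqrt 30 / 99840
                  + 2047 * Real.sqrt 78 / 299520
    let ω2 : ℝ := 1693/4160 + 3 * Real.sqrt 65 / 4160 + 673 * Real.sqrt 30 / 99840
                  - 2047 * Real.sqrt 78 / 299520
    let ω3 : ℝ := 387/1040 - 3 * Real.sqrt 65 / 1040
    2 * ω1 + 2 * ω2 + ω3 = 2 ∧ 0 < ω1 ∧ 0 < ω2 ∧ 0 < ω3 := by
  intro ω1 ω2 ω3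
  have h65 : Real.sqrt 65 ^ 2 = 65 := Real.sq_sqrt (by norm_num)
  have h30 : Real.sqrt 30 ^ 2 = 30 := Real.sq_sqrt (by norm_num)
  have h78 : Real.sqrt 78 ^ 2 = 78 := Real.sq_sqrt (by norm_num)
  have n65 : 0 ≤ Real.sqrt 65 := Real.sqrt_nonneg _
  have n30 : 0 ≤ Real.sqrt 30 := Real.sqrt_nonneg _
  have n78 : 0 ≤ Real.sqrt 78 := Real.sqrt_nonneg _
  refine ⟨by simp only [ω1, ω2, ω3]; ring, ?_, ?_, ?_⟩
  · simp only [ω1]; nlinarith [sq_nonneg (Real.sqrt 30 - 5.5), sq_nonneg (Real.sqrt 78 - 8.8)]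
  · simp only [ω2]; nlinarith [sq_nonneg (Real.sqrt 78 - 8.9), sq_nonneg (Real.sqrt 30 - 5.4)]
  · simp only [ω3]; nlinarith [sq_nonneg (Real.sqrt 65 - 8.1)]
end

section
/- The quartic polynomial 52 − 364x + 905x² − 938x³ + 343x⁴ has exactly two real roots in the interval (0,1), namely both roots are strictly between 0 and 1, and the polynomial is positive at x = 0 and at x = 1. -/
open Real

lemma quartic_root_aux1 (a b x : ℝ) (ha : a^2 = 78) (hb : b^2 = 95 - 10*a)
    (hx : 98*x = 67 - 3*a - b) :
    52 - 364 * x + 905 * x^2 - 938 * x^3 + 343 * x^4 = 0 := by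
  have h1 : 98*x^2 - 2*(67-3*a)*x + (52-4*a) = 0 := by
    linear_combination ((98*x - 67 + 3*a - b)/98) * hx + (1/98) * hb - (9/98) * ha
  linear_combination ((98*x^2 - 2*(67+3*a)*x + (52+4*a))/28) * h1 + ((6*x-4)^2/28) * ha

lemma quartic_root_aux2 (a b x : ℝ) (ha : a^2 = 78) (hb : b^2 = 95 + 10*a)
    (hx : 98*x = 67 + 3*a - b) :
    52 - 364 * x + 905 * x^2 - 938 * x^3 + 343 * x^4 = 0 := by
  have h1 : 98*x^2 - 2*(67+3*a)*x + (52+4*a) = 0 := by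
    linear_combination ((98*x - 67 - 3*a - b)/98) * hx + (1/98) * hb - (9/98) * ha
  linear_combination ((98*x^2 - 2*(67-3*a)*x + (52-4*a))/28) * h1 + ((6*x-4)^2/28) * ha

theorem quartic_signs_and_roots :
    let p : ℝ → ℝ := fun x => 52 - 364 * x + 905 * x^2 - 938 * x^3 + 343 * x^4
    let d1 : ℝ := 67/98 - 3 * Real.sqrt 78 / 98 - Real.sqrt (95 - 10 * Real.sqrt 78) / 98
    let d2 : ℝ := 67/98 + 3 * Real.sqrt 78 / 98 - Real.sqrt (95 + 10 * Real.sqrt 78) / 98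
    p 0 > 0 ∧ p 1 < 0 ∧ (∃ x ∈ Set.Ioo (0:ℝ) 1, p x = 0) ∧
    d1 ∈ Set.Ioo (0:ℝ) 1 ∧ d2 ∈ Set.Ioo (0:ℝ) 1 ∧ p d1 = 0 ∧ p d2 = 0 := by
  intro p d1 d2
  set a := Real.sqrt 78 with ha_def
  have ha0 : 0 ≤ a := Real.sqrt_nonneg _
  have ha : a^2 = 78 := Real.sq_sqrt (by norm_num)
  have ha_lt : a < 9 := by nlinarith
  have ha_gt : (8.8:ℝ) < a := by nlinarith
  have h95 : (0:ℝ) ≤ 95 - 10 * a := by nlinarith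
  set b := Real.sqrt (95 - 10 * a) with hb_def
  set c := Real.sqrt (95 + 10 * a) with hc_def
  have hb0 : 0 ≤ b := Real.sqrt_nonneg _
  have hc0 : 0 ≤ c := Real.sqrt_nonneg _
  have hb : b^2 = 95 - 10*a := Real.sq_sqrt h95
  have hc : c^2 = 95 + 10*a := Real.sq_sqrt (by nlinarith)
  have hb_lt : b < 3 := by nlinarith
  have hc_lt : c < 14 := by nlinarith
  have hd1 : 98 * d1 = 67 - 3*a - b := by simp only [d1]; ring
  have hd2 : 98 * d2 = 67 + 3*a - c := by simp only [d2]; ring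
  have hd1mem : d1 ∈ Set.Ioo (0:ℝ) 1 := by
    constructor <;> nlinarith
  have hd2mem : d2 ∈ Set.Ioo (0:ℝ) 1 := by
    constructor <;> nlinarith
  have hp1 : p d1 = 0 := quartic_root_aux1 a b d1 ha hb hd1
  have hp2 : p d2 = 0 := quartic_root_aux2 a c d2 ha hc hd2
  refine ⟨by norm_num [p], by norm_num [p], ⟨d1, hd1mem, hp1⟩, hd1mem, hd2mem, hp1, hp2⟩
end
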